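/- arXiv:1305.1081 — 7 statements merged into one kernel-verified Lean document; each statement's English description precedes it below -/
import Mathlib

section
/- Let A be a real vector space with a modular ρ satisfying the Δ₂-condition such that A_ρ is complete, and let P be a cone in A_ρ that is normal with normal constant c > 0 (i.e., 0 ≼ x ≼ y implies ρ(x) ≤ cρ(y)). Define σ(x) = inf_{y ≼ x} ρ(y) + inf_{x ≼ z} ρ(z) for x ∈ A_ρ. Then σ is a modular on A_ρ; in particular, σ(x) = 0 implies x = 0, σ(−x) = σ(x), and σ(αx + βu) ≤ σ(x) + σ(u) for all x, u ∈ A_ρ and all α, β ≥ 0 with α + β = 1. -/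
open Filter Topology

/-- `ρ` is a modular on the real vector space `A`. -/
def IsModular {A : Type*} [AddCommGroup A] [Module ℝ A] (ρ : A → ℝ) : Prop :=
  (∀ x : A, ρ x = 0 ↔ x = 0) ∧ (∀ x : A, ρ (-x) = ρ x) ∧
  ∀ (x y : A) (a b : ℝ), 0 ≤ a → 0 ≤ b → a + b = 1 → ρ (a • x + b • y) ≤ ρ x + ρ y

/-- The Δ₂-condition for `ρ` with constant `k`. -/
def SatisfiesDelta2 {A : Type*} [AddCommGroup A] [Module ℝ A] (ρ : A → ℝ) (k : ℝ) : Prop :=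
  0 < k ∧ ∀ x : A, ρ ((2 : ℝ) • x) ≤ k * ρ x

/-- Every vector of `A` lies in the modular space `A_ρ`, i.e. `ρ (α • x) → 0` as `α → 0`. -/
def IsModularSpace {A : Type*} [AddCommGroup A] [Module ℝ A] (ρ : A → ℝ) : Prop :=
  ∀ x : A, Tendsto (fun t : ℝ => ρ (t • x)) (𝓝 0) (𝓝 0)

/-- `A_ρ` is ρ-complete: every ρ-Cauchy sequence ρ-converges. -/
def RhoComplete {A : Type*} [AddCommGroup A] [Module ℝ A] (ρ : A → ℝ) : Prop :=
  ∀ u : ℕ → A,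
    (∀ ε > (0 : ℝ), ∃ N : ℕ, ∀ m ≥ N, ∀ n ≥ N, ρ (u m - u n) < ε) →
    ∃ x : A, Tendsto (fun n => ρ (u n - x)) atTop (𝓝 0)

/-- A set is ρ-closed if it contains limits of its ρ-convergent sequences. -/
def RhoClosed {A : Type*} [AddCommGroup A] [Module ℝ A] (ρ : A → ℝ) (S : Set A) : Prop :=
  ∀ (u : ℕ → A) (x : A), (∀ n, u n ∈ S) →
    Tendsto (fun n => ρ (u n - x)) atTop (𝓝 0) → x ∈ S

/-- `P` is a cone in `A_ρ`. -/
def IsCone {A : Type*} [AddCommGroup A] [Module ℝ A] (ρ : A → ℝ) (P : Set A) : Prop :=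
  RhoClosed ρ P ∧ P.Nonempty ∧ P ≠ {0} ∧
  (∀ (a b : ℝ), 0 ≤ a → 0 ≤ b → ∀ x ∈ P, ∀ y ∈ P, a • x + b • y ∈ P) ∧
  (∀ x : A, x ∈ P → -x ∈ P → x = 0)

/-- The partial order induced by the cone `P`: `x ≼ y` iff `y - x ∈ P`. -/
def coneLE {A : Type*} [AddCommGroup A] [Module ℝ A] (P : Set A) (x y : A) : Prop :=
  y - x ∈ P

/-- `P` is normal with normal constant `c`: `0 ≼ x ≼ y` implies `ρ x ≤ c * ρ y`. -/
def IsNormalCone {A : Type*} [AddCommGroup A] [Module ℝ A]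
    (ρ : A → ℝ) (P : Set A) (c : ℝ) : Prop :=
  ∀ x y : A, x ∈ P → coneLE P x y → ρ x ≤ c * ρ y

/-- The modular `σ(x) = inf_{y ≼ x} ρ(y) + inf_{x ≼ z} ρ(z)`. -/
noncomputable def sigmaModular {A : Type*} [AddCommGroup A] [Module ℝ A]
    (ρ : A → ℝ) (P : Set A) (x : A) : ℝ :=
  sInf (ρ '' {y | coneLE P y x}) + sInf (ρ '' {z | coneLE P x z})

/-- `σ` is a modular on `A_ρ`. -/
theorem sigma_is_modular
    {A : Type*} [AddCommGroup A] [Module ℝ A] (ρ : A → ℝ)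
    (hmod : IsModular ρ) (hΔ₂ : ∃ k : ℝ, SatisfiesDelta2 ρ k)
    (hms : IsModularSpace ρ) (hcomplete : RhoComplete ρ)
    (P : Set A) (hP : IsCone ρ P)
    (c : ℝ) (hc : 0 < c) (hnormal : IsNormalCone ρ P c) :
    IsModular (sigmaModular ρ P) := by
  obtain ⟨k, hk, hΔ⟩ := hΔ₂
  obtain ⟨hclosed, ⟨p0, hp0⟩, hPne, hcone, hpm⟩ := hP
  obtain ⟨hzero, hsymm, hconv⟩ := hmod
  have hρ0 : ρ 0 = 0 := (hzero 0).2 rfl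
  have hnonneg : ∀ x : A, 0 ≤ ρ x := by
    intro x
    have h := hconv x (-x) (1/2) (1/2) (by norm_num) (by norm_num) (by norm_num)
    have he : (1/2:ℝ) • x + (1/2:ℝ) • (-x) = 0 := by module
    rw [he, hρ0] at h
    have := hsymm x
    linarith
  have h0P : (0:A) ∈ P := by
    have := hcone 0 0 le_rfl le_rfl p0 hp0 p0 hp0
    simpa using this
  have hsum : ∀ u v : A, ρ (u + v) ≤ k * (ρ u + ρ v) := by
    intro u v
    have h1 : u + v = (2:ℝ) • ((1/2:ℝ) • u + (1/2:ℝ) • v) := by module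
    have h2 := hΔ ((1/2:ℝ) • u + (1/2:ℝ) • v)
    have h3 := hconv u v (1/2) (1/2) (by norm_num) (by norm_num) (by norm_num)
    calc ρ (u+v) = ρ ((2:ℝ) • ((1/2:ℝ) • u + (1/2:ℝ) • v)) := by rw [← h1]
    _ ≤ k * ρ ((1/2:ℝ) • u + (1/2:ℝ) • v) := h2
    _ ≤ k * (ρ u + ρ v) := mul_le_mul_of_nonneg_left h3 hk.le
  have hbdd : ∀ s : Set A, BddBelow (ρ '' s) := by
    intro s
    refine ⟨0, ?_⟩
    rintro a ⟨y, -, rfl⟩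
    exact hnonneg y
  have hLne : ∀ x : A, ({y | coneLE P y x} : Set A).Nonempty := by
    intro x
    exact ⟨x, by simpa [coneLE] using h0P⟩
  have hRne : ∀ x : A, ({z | coneLE P x z} : Set A).Nonempty := by
    intro x
    exact ⟨x, by simpa [coneLE] using h0P⟩
  have hInfnonneg : ∀ s : Set A, s.Nonempty → 0 ≤ sInf (ρ '' s) := by
    intro s hs
    refine le_csInf (hs.image ρ) ?_
    rintro a ⟨y, -, rfl⟩
    exact hnonneg y
  refine ⟨?_, ?_, ?_⟩
  · -- σ x = 0 ↔ x = 0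
    intro x
    constructor
    · intro hσ
      simp only [sigmaModular] at hσ
      have hI1 := hInfnonneg _ (hLne x)
      have hI2 := hInfnonneg _ (hRne x)
      have hI1' : sInf (ρ '' {y | coneLE P y x}) = 0 := by linarith
      have hI2' : sInf (ρ '' {z | coneLE P x z}) = 0 := by linarith
      have hx0 : ρ x ≤ 0 := by
        refine le_of_forall_pos_le_add ?_
        intro ε hε
        have hD : (0:ℝ) < k * (2*c*k+1) := by positivity
        set δ : ℝ := ε / (k * (2*c*k+1)) with hδdef
        have hδ : 0 < δ := div_pos hε hD
        obtain ⟨a₁, ⟨y, hy, rfl⟩, ha₁⟩ :=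
          Real.lt_sInf_add_pos ((hLne x).image ρ) hδ
        obtain ⟨a₂, ⟨z, hz, rfl⟩, ha₂⟩ :=
          Real.lt_sInf_add_pos ((hRne x).image ρ) hδ
        rw [hI1', zero_add] at ha₁
        rw [hI2', zero_add] at ha₂
        have hxy : x - y ∈ P := hy
        have hzx : z - x ∈ P := hz
        have hnorm : ρ (x - y) ≤ c * ρ (z - y) := by
          refine hnormal _ _ hxy ?_
          show (z - y) - (x - y) ∈ P
          have : (z - y) - (x - y) = z - x := by abel
          rw [this]; exact hzx
        have hzy : ρ (z - y) ≤ k * (ρ z + ρ y) := by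
          have h := hsum z (-y)
          rw [hsymm y] at h
          simpa [sub_eq_add_neg] using h
        have hxx : ρ x ≤ k * (ρ (x - y) + ρ y) := by
          have h := hsum (x - y) y
          simpa using h
        have hεδ : δ * (k * (2*c*k+1)) = ε := div_mul_cancel₀ ε hD.ne'
        have hny : 0 ≤ ρ y := hnonneg y
        have hnz : 0 ≤ ρ z := hnonneg z
        have hnzy : 0 ≤ ρ (z - y) := hnonneg _
        have s1 : c * ρ (z - y) ≤ c * (k * (ρ z + ρ y)) :=
          mul_le_mul_of_nonneg_left hzy hc.le
        have s2 : ρ x ≤ k * (c * (k * (ρ z + ρ y)) + ρ y) :=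
          le_trans hxx (mul_le_mul_of_nonneg_left (by linarith) hk.le)
        have t1 : ρ z + ρ y ≤ 2 * δ := by linarith
        have t2 : k * (ρ z + ρ y) ≤ k * (2 * δ) := mul_le_mul_of_nonneg_left t1 hk.le
        have t3 : c * (k * (ρ z + ρ y)) ≤ c * (k * (2 * δ)) :=
          mul_le_mul_of_nonneg_left t2 hc.le
        have t4 : ρ x ≤ k * (c * (k * (2 * δ)) + δ) :=
          le_trans s2 (mul_le_mul_of_nonneg_left (by linarith) hk.le)
        have t5 : k * (c * (k * (2 * δ)) + δ) = ε := by rw [← hεδ]; ring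
        linarith
      exact (hzero x).1 (le_antisymm hx0 (hnonneg x))
    · rintro rfl
      simp only [sigmaModular]
      have h1 : sInf (ρ '' {y | coneLE P y (0:A)}) ≤ 0 := by
        have : ρ (0:A) ∈ ρ '' {y | coneLE P y (0:A)} :=
          ⟨0, by simpa [coneLE] using h0P, rfl⟩
        simpa [hρ0] using csInf_le (hbdd _) this
      have h2 : sInf (ρ '' {z | coneLE P (0:A) z}) ≤ 0 := by
        have : ρ (0:A) ∈ ρ '' {z | coneLE P (0:A) z} :=
          ⟨0, by simpa [coneLE] using h0P, rfl⟩
        simpa [hρ0] using csInf_le (hbdd _) this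
      have h3 := hInfnonneg _ (hLne (0:A))
      have h4 := hInfnonneg _ (hRne (0:A))
      linarith
  · -- σ (-x) = σ x
    intro x
    have himg1 : ρ '' {y | coneLE P y (-x)} = ρ '' {z | coneLE P x z} := by
      ext a
      constructor
      · rintro ⟨y, hy, rfl⟩
        refine ⟨-y, ?_, hsymm y⟩
        show -y - x ∈ P
        have : -y - x = -x - y := by abel
        rw [this]; exact hy
      · rintro ⟨z, hz, rfl⟩
        refine ⟨-z, ?_, hsymm z⟩
        show -x - -z ∈ P
        have : -x - -z = z - x := by abel
        rw [this]; exact hz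
    have himg2 : ρ '' {z | coneLE P (-x) z} = ρ '' {y | coneLE P y x} := by
      ext a
      constructor
      · rintro ⟨z, hz, rfl⟩
        refine ⟨-z, ?_, hsymm z⟩
        show x - -z ∈ P
        have : x - -z = z - -x := by abel
        rw [this]; exact hz
      · rintro ⟨y, hy, rfl⟩
        refine ⟨-y, ?_, hsymm y⟩
        show -y - -x ∈ P
        have : -y - -x = x - y := by abel
        rw [this]; exact hy
    simp only [sigmaModular]
    rw [himg1, himg2, add_comm]
  · -- subadditivity
    intro x u a b ha hb hab
    refine le_of_forall_pos_le_add ?_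
    intro ε hε
    have hε4 : 0 < ε / 4 := by linarith
    obtain ⟨r₁, ⟨y₁, hy₁, rfl⟩, hr₁⟩ := Real.lt_sInf_add_pos ((hLne x).image ρ) hε4
    obtain ⟨r₂, ⟨z₁, hz₁, rfl⟩, hr₂⟩ := Real.lt_sInf_add_pos ((hRne x).image ρ) hε4
    obtain ⟨r₃, ⟨y₂, hy₂, rfl⟩, hr₃⟩ := Real.lt_sInf_add_pos ((hLne u).image ρ) hε4
    obtain ⟨r₄, ⟨z₂, hz₂, rfl⟩, hr₄⟩ := Real.lt_sInf_add_pos ((hRne u).image ρ) hε4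
    have hmemL : coneLE P (a • y₁ + b • y₂) (a • x + b • u) := by
      show (a • x + b • u) - (a • y₁ + b • y₂) ∈ P
      have : (a • x + b • u) - (a • y₁ + b • y₂) = a • (x - y₁) + b • (u - y₂) := by
        module
      rw [this]
      exact hcone a b ha hb _ hy₁ _ hy₂
    have hmemR : coneLE P (a • x + b • u) (a • z₁ + b • z₂) := by
      show (a • z₁ + b • z₂) - (a • x + b • u) ∈ P
      have : (a • z₁ + b • z₂) - (a • x + b • u) = a • (z₁ - x) + b • (z₂ - u) := by
        module
      rw [this]
      exact hcone a b ha hb _ hz₁ _ hz₂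
    have h1 : sInf (ρ '' {y | coneLE P y (a • x + b • u)}) ≤ ρ y₁ + ρ y₂ :=
      le_trans (csInf_le (hbdd _) ⟨_, hmemL, rfl⟩) (hconv y₁ y₂ a b ha hb hab)
    have h2 : sInf (ρ '' {z | coneLE P (a • x + b • u) z}) ≤ ρ z₁ + ρ z₂ :=
      le_trans (csInf_le (hbdd _) ⟨_, hmemR, rfl⟩) (hconv z₁ z₂ a b ha hb hab)
    simp only [sigmaModular]
    linarith
end

section
/- Let A be a real vector space with a modular ρ satisfying the Δ₂-condition such that A_ρ is complete, let P be a cone in A_ρ that is normal with normal constant c > 0, and define σ(x) = inf_{y ≼ x} ρ(y) + inf_{x ≼ z} ρ(z) for x ∈ A_ρ. Then the cone P is normal with respect to σ with normal constant 1: if 0 ≼ x ≼ u, then σ(x) ≤ σ(u); indeed, for 0 ≼ x one has σ(x) = inf_{x ≼ z} ρ(z). -/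
open Filter Topology

/-- The cone `P` is normal with respect to `σ` with normal constant `1`;
indeed, for `0 ≼ x`, `σ(x) = inf_{x ≼ z} ρ(z)`. -/
theorem sigma_normal_constant_one
    {A : Type*} [AddCommGroup A] [Module ℝ A] (ρ : A → ℝ)
    (hmod : IsModular ρ) (hΔ₂ : ∃ k : ℝ, SatisfiesDelta2 ρ k)
    (hms : IsModularSpace ρ) (hcomplete : RhoComplete ρ)
    (P : Set A) (hP : IsCone ρ P)
    (c : ℝ) (hc : 0 < c) (hnormal : IsNormalCone ρ P c) :
    (∀ x : A, x ∈ P → sigmaModular ρ P x = sInf (ρ '' {z | coneLE P x z})) ∧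
    (∀ x u : A, x ∈ P → coneLE P x u → sigmaModular ρ P x ≤ sigmaModular ρ P u) := by
  obtain ⟨hzero, hneg, hconv⟩ := hmod
  -- ρ is nonnegative
  have hnonneg : ∀ x : A, 0 ≤ ρ x := by
    intro x
    have h0 : ρ (0 : A) = 0 := (hzero 0).mpr rfl
    have h := hconv x (-x) (1/2) (1/2) (by norm_num) (by norm_num) (by norm_num)
    have heq : (1/2 : ℝ) • x + (1/2 : ℝ) • (-x) = 0 := by
      rw [smul_neg]; abel
    rw [heq, h0, hneg] at h
    linarith
  have h0P : (0 : A) ∈ P := by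
    obtain ⟨x0, hx0⟩ := hP.2.1
    have := hP.2.2.2.1 0 0 le_rfl le_rfl x0 hx0 x0 hx0
    simpa using this
  have haddP : ∀ x ∈ P, ∀ y ∈ P, x + y ∈ P := by
    intro x hx y hy
    have := hP.2.2.2.1 1 1 zero_le_one zero_le_one x hx y hy
    simpa using this
  have hbdd : ∀ S : Set A, BddBelow (ρ '' S) := by
    intro S
    exact ⟨0, fun r ⟨y, _, hy⟩ => hy ▸ hnonneg y⟩
  have hinf_nonneg : ∀ S : Set A, 0 ≤ sInf (ρ '' S) := by
    intro S
    rcases Set.eq_empty_or_nonempty S with h | ⟨y, hy⟩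
    · simp [h, Real.sInf_empty]
    · exact le_csInf ⟨ρ y, y, hy, rfl⟩ (fun r ⟨z, _, hz⟩ => hz ▸ hnonneg z)
  -- for x ∈ P, the lower inf is 0
  have hlow : ∀ x : A, x ∈ P → sInf (ρ '' {y | coneLE P y x}) = 0 := by
    intro x hx
    refine le_antisymm ?_ (hinf_nonneg _)
    have h0mem : (0 : A) ∈ {y | coneLE P y x} := by
      simp only [Set.mem_setOf_eq, coneLE, sub_zero]; exact hx
    have := csInf_le (hbdd _) (Set.mem_image_of_mem ρ h0mem)
    rwa [(hzero 0).mpr rfl] at this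
  constructor
  · intro x hx
    unfold sigmaModular
    rw [hlow x hx, zero_add]
  · intro x u hx hxu
    unfold sigmaModular
    rw [hlow x hx, zero_add]
    have huP : u ∈ P := by
      have := haddP x hx (u - x) hxu
      simpa using this
    have hsub : {z | coneLE P u z} ⊆ {z | coneLE P x z} := by
      intro z hz
      have := haddP _ hz _ hxu
      simpa [coneLE, sub_add_sub_cancel] using this
    have hne : (ρ '' {z | coneLE P u z}).Nonempty := by
      refine ⟨ρ u, u, ?_, rfl⟩
      simp only [Set.mem_setOf_eq, coneLE, sub_self]; exact h0P
    have h1 : sInf (ρ '' {z | coneLE P x z}) ≤ sInf (ρ '' {z | coneLE P u z}) :=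
      csInf_le_csInf (hbdd _) hne (Set.image_mono hsub)
    have h2 := hinf_nonneg {y | coneLE P y u}
    linarith
end

section
/- Let A be a real vector space with a modular ρ satisfying the Δ₂-condition with constant k > 0 such that A_ρ is complete, let P be a cone in A_ρ that is normal with normal constant c > 0, and define σ(x) = inf_{y ≼ x} ρ(y) + inf_{x ≼ z} ρ(z) for x ∈ A_ρ. Then σ satisfies the Δ₂-condition with the same constant k: σ(2x) ≤ kσ(x) for all x ∈ A_ρ. -/
open Filter Topology

/-- `σ` satisfies the Δ₂-condition with the same constant `k`. -/
theorem sigma_delta2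
    {A : Type*} [AddCommGroup A] [Module ℝ A] (ρ : A → ℝ)
    (hmod : IsModular ρ) (k : ℝ) (hΔ₂ : SatisfiesDelta2 ρ k)
    (hms : IsModularSpace ρ) (hcomplete : RhoComplete ρ)
    (P : Set A) (hP : IsCone ρ P)
    (c : ℝ) (hc : 0 < c) (hnormal : IsNormalCone ρ P c) :
    ∀ x : A, sigmaModular ρ P ((2 : ℝ) • x) ≤ k * sigmaModular ρ P x := by
  obtain ⟨hk, hΔ⟩ := hΔ₂
  -- ρ is nonnegative
  have hρ0 : ∀ x : A, 0 ≤ ρ x := by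
    intro x
    have := hmod.2.2 x x (1/2) (1/2) (by norm_num) (by norm_num) (by norm_num)
    have hx : (1/2 : ℝ) • x + (1/2 : ℝ) • x = x := by
      rw [← add_smul]; norm_num
    rw [hx] at this
    linarith
  have h0P : (0 : A) ∈ P := by
    obtain ⟨p, hp⟩ := hP.2.1
    have := hP.2.2.2.1 0 0 le_rfl le_rfl p hp p hp
    simpa using this
  -- key lemma on infima
  have key : ∀ S T : Set ℝ, S.Nonempty → (∀ r ∈ T, (0:ℝ) ≤ r) →
      (∀ r ∈ S, ∃ t ∈ T, t ≤ k * r) → sInf T ≤ k * sInf S := by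
    intro S T hS hT h
    rw [← div_le_iff₀' hk]
    apply le_csInf hS
    intro r hr
    obtain ⟨t, htT, htr⟩ := h r hr
    rw [div_le_iff₀' hk]
    exact le_trans (csInf_le ⟨0, fun s hs => hT s hs⟩ htT) htr
  intro x
  have hmem : ∀ y z : A, coneLE P y z → coneLE P ((2:ℝ) • y) ((2:ℝ) • z) := by
    intro y z h
    have : (2:ℝ) • z - (2:ℝ) • y = (2:ℝ) • (z - y) + (0:ℝ) • (0:A) := by
      rw [smul_sub]; simp
    unfold coneLE
    rw [this]
    exact hP.2.2.2.1 2 0 (by norm_num) le_rfl _ h _ h0P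
  have h1 : sInf (ρ '' {y | coneLE P y ((2:ℝ) • x)}) ≤ k * sInf (ρ '' {y | coneLE P y x}) := by
    refine key _ _ ⟨ρ x, ⟨x, by simpa [coneLE] using h0P, rfl⟩⟩ ?_ ?_
    · rintro r ⟨y, hy, rfl⟩; exact hρ0 y
    · rintro r ⟨y, hy, rfl⟩
      exact ⟨ρ ((2:ℝ) • y), ⟨(2:ℝ) • y, hmem y x hy, rfl⟩, hΔ y⟩
  have h2 : sInf (ρ '' {z | coneLE P ((2:ℝ) • x) z}) ≤ k * sInf (ρ '' {z | coneLE P x z}) := by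
    refine key _ _ ⟨ρ x, ⟨x, by simpa [coneLE] using h0P, rfl⟩⟩ ?_ ?_
    · rintro r ⟨z, hz, rfl⟩; exact hρ0 z
    · rintro r ⟨z, hz, rfl⟩
      exact ⟨ρ ((2:ℝ) • z), ⟨(2:ℝ) • z, hmem x z hz, rfl⟩, hΔ z⟩
  unfold sigmaModular
  linarith
end

section
/- Let A be a real vector space with a convex modular ρ satisfying the Δ₂-condition such that A_ρ is complete, let P be a cone in A_ρ that is unital and normal with normal constant 1, and let (X, d, P) be a unital-normal vector ultrametric space. Then the vector ultrametric is jointly continuous in the following sense: if (xₙ) and (yₙ) are sequences in X with ρ(d(xₙ, x)) → 0 and ρ(d(yₙ, y)) → 0 for some x, y ∈ X, then ρ(d(xₙ, yₙ)) → ρ(d(x, y)) as n → ∞. -/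
open Filter Topology

/-- `ρ` is a convex modular. -/
def IsConvexModular {A : Type*} [AddCommGroup A] [Module ℝ A] (ρ : A → ℝ) : Prop :=
  IsModular ρ ∧
  ∀ (x y : A) (a b : ℝ), 0 ≤ a → 0 ≤ b → a + b = 1 →
    ρ (a • x + b • y) ≤ a * ρ x + b * ρ y

/-- `P` is normal with normal constant `1`: `0 ≼ x ≼ y` implies `ρ x ≤ ρ y`. -/
def IsNormalCone1 {A : Type*} [AddCommGroup A] [Module ℝ A] (ρ : A → ℝ) (P : Set A) : Prop :=
  ∀ x y : A, x ∈ P → coneLE P x y → ρ x ≤ ρ y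

/-- `e` is a unit for the cone `P`: `e ∈ P`, `ρ e = 1` and `x ≼ ρ(x) • e` for all `x ∈ P`. -/
def IsUnit' {A : Type*} [AddCommGroup A] [Module ℝ A] (ρ : A → ℝ) (P : Set A) (e : A) : Prop :=
  e ∈ P ∧ ρ e = 1 ∧ ∀ x ∈ P, coneLE P x (ρ x • e)

/-- `d` is a vector ultrametric on `X` with values in the cone `P ⊆ A_ρ`. -/
def IsVectorUltrametric {A : Type*} [AddCommGroup A] [Module ℝ A]
    {X : Type*} (P : Set A) (d : X → X → A) : Prop :=
  (∀ x y : X, d x y ∈ P) ∧ (∀ x y : X, d x y = 0 ↔ x = y) ∧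
  (∀ x y : X, d x y = d y x) ∧
  (∀ x y z : X, ∀ p ∈ P, coneLE P (d x z) p → coneLE P (d y z) p → coneLE P (d x y) p)

/-- The ball centered at `x` with radius `p`. -/
def vBall {A : Type*} [AddCommGroup A] [Module ℝ A] {X : Type*}
    (ρ : A → ℝ) (d : X → X → A) (x : X) (p : A) : Set X :=
  {y | ρ (d x y) ≤ ρ p}

/-- Spherical completeness: every chain of balls has nonempty intersection. -/
def SphericallyCompleteVUM {A : Type*} [AddCommGroup A] [Module ℝ A] {X : Type*}
    (ρ : A → ℝ) (P : Set A) (d : X → X → A) : Prop :=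
  ∀ C : Set (Set X),
    (∀ S ∈ C, ∃ (x : X) (p : A), p ∈ P ∧ p ≠ 0 ∧ S = vBall ρ d x p) →
    IsChain (· ⊆ ·) C → (⋂₀ C).Nonempty

/-- A subset `G ⊆ X` is compact: every sequence in `G` has a subsequence
converging (with respect to `ρ ∘ d`) to a point of `G`. -/
def VUMCompact {A : Type*} [AddCommGroup A] [Module ℝ A] {X : Type*}
    (ρ : A → ℝ) (d : X → X → A) (G : Set X) : Prop :=
  ∀ u : ℕ → X, (∀ n, u n ∈ G) →
    ∃ x ∈ G, ∃ k : ℕ → ℕ, StrictMono k ∧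
      Tendsto (fun n => ρ (d (u (k n)) x)) atTop (𝓝 0)

set_option maxHeartbeats 1000000 in
/-- Joint continuity of the vector ultrametric: if `xₙ → x` and `yₙ → y`
then `ρ(d(xₙ, yₙ)) → ρ(d(x, y))`. -/
theorem vum_joint_continuity
    {A : Type*} [AddCommGroup A] [Module ℝ A] (ρ : A → ℝ)
    (hconv : IsConvexModular ρ) (hΔ₂ : ∃ k : ℝ, SatisfiesDelta2 ρ k)
    (hms : IsModularSpace ρ) (hcomplete : RhoComplete ρ)
    (P : Set A) (hP : IsCone ρ P) (hnormal : IsNormalCone1 ρ P)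
    (hunital : ∃ e : A, IsUnit' ρ P e)
    {X : Type*} [Nonempty X] (d : X → X → A)
    (hd : IsVectorUltrametric P d)
    (x y : X) (u v : ℕ → X)
    (hu : Tendsto (fun n => ρ (d (u n) x)) atTop (𝓝 0))
    (hv : Tendsto (fun n => ρ (d (v n) y)) atTop (𝓝 0)) :
    Tendsto (fun n => ρ (d (u n) (v n))) atTop (𝓝 (ρ (d x y))) := by
  obtain ⟨k, hk0, hΔ⟩ := hΔ₂
  obtain ⟨e, heP, hρe, hunit⟩ := hunital
  obtain ⟨hmod, hconvex⟩ := hconv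
  obtain ⟨hzero, hneg, _⟩ := hmod
  obtain ⟨hdP, hdzero, hdsymm, hdtri⟩ := hd
  have ρ0 : ρ 0 = 0 := (hzero 0).mpr rfl
  have ρnn : ∀ z : A, 0 ≤ ρ z := by
    intro z
    have h := hconvex z (-z) (1/2) (1/2) (by norm_num) (by norm_num) (by norm_num)
    have hz : (1/2 : ℝ) • z + (1/2 : ℝ) • (-z) = 0 := by module
    rw [hz, ρ0, hneg] at h
    linarith
  have Padd : ∀ {p q : A}, p ∈ P → q ∈ P → p + q ∈ P := by
    intro p q hp hq
    have := hP.2.2.2.1 1 1 zero_le_one zero_le_one p hp q hq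
    simpa using this
  have Psmul : ∀ {s : ℝ} {p : A}, 0 ≤ s → p ∈ P → s • p ∈ P := by
    intro s p hs hp
    have := hP.2.2.2.1 s 0 hs le_rfl p hp p hp
    simpa using this
  have Lscale : ∀ (s : ℝ) (z : A), 0 ≤ s → s ≤ 1 → ρ (s • z) ≤ s * ρ z := by
    intro s z hs hs1
    have h := hconvex z 0 s (1 - s) hs (by linarith) (by ring)
    rw [smul_zero, add_zero, ρ0, mul_zero, add_zero] at h
    exact h
  have L2 : ∀ (ε : ℝ) (z : A), 0 ≤ ε → ε ≤ 1 →
      ρ ((1 + ε) • z) ≤ (1 + ε * (k - 1)) * ρ z := by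
    intro ε z hε hε1
    have h := hconvex z ((2 : ℝ) • z) (1 - ε) ε (by linarith) hε (by ring)
    have hz : (1 - ε) • z + ε • ((2 : ℝ) • z) = (1 + ε) • z := by module
    rw [hz] at h
    have h2 := hΔ z
    calc ρ ((1 + ε) • z) ≤ (1 - ε) * ρ z + ε * ρ ((2 : ℝ) • z) := h
      _ ≤ (1 - ε) * ρ z + ε * (k * ρ z) := by nlinarith
      _ = (1 + ε * (k - 1)) * ρ z := by ring
  have L3 : ∀ (ε : ℝ), 0 < ε → ∀ (z w : A),
      ρ (z + w) ≤ (1/(1+ε)) * ρ ((1+ε) • z) + (ε/(1+ε)) * ρ (((1+ε)/ε) • w) := by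
    intro ε hε z w
    have hne : (1 + ε) ≠ 0 := by positivity
    have h := hconvex ((1+ε) • z) (((1+ε)/ε) • w) (1/(1+ε)) (ε/(1+ε))
      (by positivity) (by positivity) (by field_simp)
    have e1 : (1/(1+ε)) • ((1+ε) • z) = z := by
      rw [smul_smul, one_div_mul_cancel hne, one_smul]
    have e2 : (ε/(1+ε)) • (((1+ε)/ε) • w) = w := by
      rw [smul_smul]
      rw [show ε/(1+ε) * ((1+ε)/ε) = 1 by field_simp]
      exact one_smul _ _
    rwa [e1, e2] at h
  have hD0 : 0 ≤ ρ (d x y) := ρnn _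
  have hdxyP : d x y ∈ P := hdP x y
  -- key quantitative bound
  have key : ∀ ε : ℝ, 0 < ε → ε ≤ 1 → ∀ n : ℕ,
      ρ (d (u n) x) + ρ (d (v n) y) ≤ ε / 2 →
      |ρ (d (u n) (v n)) - ρ (d x y)| ≤
        ε * (k * ((k + 2) * ρ (d x y) + 1)) + 2 * (ρ (d (u n) x) + ρ (d (v n) y)) := by
    intro ε hε hε1 n htn
    set tn : ℝ := ρ (d (u n) x) + ρ (d (v n) y) with htndef
    have ha0 : 0 ≤ ρ (d (u n) x) := ρnn _
    have hb0 : 0 ≤ ρ (d (v n) y) := ρnn _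
    have htn0 : 0 ≤ tn := by positivity
    have htn1 : tn ≤ 1 := by linarith
    have hau : ρ (d (u n) x) • e - d (u n) x ∈ P := hunit _ (hdP (u n) x)
    have hbv : ρ (d (v n) y) • e - d (v n) y ∈ P := hunit _ (hdP (v n) y)
    -- the upper ball p
    set p : A := d x y + tn • e with hpdef
    have hpP : p ∈ P := Padd hdxyP (Psmul htn0 heP)
    have hux : coneLE P (d (u n) x) p := by
      show p - d (u n) x ∈ P
      have heq : p - d (u n) x =
          (d x y + ρ (d (v n) y) • e) + (ρ (d (u n) x) • e - d (u n) x) := by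
        rw [hpdef, htndef]; module
      rw [heq]
      exact Padd (Padd hdxyP (Psmul hb0 heP)) hau
    have hvy : coneLE P (d (v n) y) p := by
      show p - d (v n) y ∈ P
      have heq : p - d (v n) y =
          (d x y + ρ (d (u n) x) • e) + (ρ (d (v n) y) • e - d (v n) y) := by
        rw [hpdef, htndef]; module
      rw [heq]
      exact Padd (Padd hdxyP (Psmul ha0 heP)) hbv
    have hxy : coneLE P (d x y) p := by
      show p - d x y ∈ P
      have heq : p - d x y = tn • e := by rw [hpdef]; module
      rw [heq]
      exact Psmul htn0 heP
    have hxv : coneLE P (d x (v n)) p := hdtri x (v n) y p hpP hxy hvy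
    have hvx : coneLE P (d (v n) x) p := by rwa [hdsymm (v n) x]
    have huv : coneLE P (d (u n) (v n)) p := hdtri (u n) (v n) x p hpP hux hvx
    have hcρp : ρ (d (u n) (v n)) ≤ ρ p := hnormal _ _ (hdP _ _) huv
    -- the lower ball q
    set q : A := d (u n) (v n) + tn • e with hqdef
    have hqP : q ∈ P := Padd (hdP _ _) (Psmul htn0 heP)
    have hux' : coneLE P (d (u n) x) q := by
      show q - d (u n) x ∈ P
      have heq : q - d (u n) x =
          (d (u n) (v n) + ρ (d (v n) y) • e) + (ρ (d (u n) x) • e - d (u n) x) := by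
        rw [hqdef, htndef]; module
      rw [heq]
      exact Padd (Padd (hdP _ _) (Psmul hb0 heP)) hau
    have hvy' : coneLE P (d (v n) y) q := by
      show q - d (v n) y ∈ P
      have heq : q - d (v n) y =
          (d (u n) (v n) + ρ (d (u n) x) • e) + (ρ (d (v n) y) • e - d (v n) y) := by
        rw [hqdef, htndef]; module
      rw [heq]
      exact Padd (Padd (hdP _ _) (Psmul ha0 heP)) hbv
    have huv' : coneLE P (d (u n) (v n)) q := by
      show q - d (u n) (v n) ∈ P
      have heq : q - d (u n) (v n) = tn • e := by rw [hqdef]; module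
      rw [heq]
      exact Psmul htn0 heP
    have hxu' : coneLE P (d x (u n)) q := by rwa [hdsymm x (u n)]
    have hvu' : coneLE P (d (v n) (u n)) q := by rwa [hdsymm (v n) (u n)]
    have hxv' : coneLE P (d x (v n)) q := hdtri x (v n) (u n) q hqP hxu' hvu'
    have hyv' : coneLE P (d y (v n)) q := by rwa [hdsymm y (v n)]
    have hxy' : coneLE P (d x y) q := hdtri x y (v n) q hqP hxv' hyv'
    have hDρq : ρ (d x y) ≤ ρ q := hnormal _ _ hdxyP hxy'
    -- analytic estimates
    have hfrac : (1 + ε) * tn / ε ≤ 1 := by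
      rw [div_le_one hε]
      nlinarith
    have hsmul : ((1+ε)/ε) • (tn • e) = ((1 + ε) * tn / ε) • e := by
      rw [smul_smul, div_mul_eq_mul_div]
    have hwbound : ρ (((1+ε)/ε) • (tn • e)) ≤ (1 + ε) * tn / ε := by
      rw [hsmul]
      calc ρ (((1 + ε) * tn / ε) • e) ≤ ((1 + ε) * tn / ε) * ρ e :=
            Lscale _ _ (by positivity) hfrac
        _ = (1 + ε) * tn / ε := by rw [hρe, mul_one]
    have hεne : (1 + ε) ≠ 0 := by positivity
    have hU : ρ (d (u n) (v n)) ≤ (1 + ε * k) * ρ (d x y) + tn := by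
      have h3 := L3 ε hε (d x y) (tn • e)
      have h2 := L2 ε (d x y) hε.le hε1
      have hterm : (ε/(1+ε)) * ((1 + ε) * tn / ε) = tn := by field_simp
      have hρp : ρ p ≤ (1/(1+ε)) * ((1 + ε * (k - 1)) * ρ (d x y)) + tn := by
        calc ρ p ≤ (1/(1+ε)) * ρ ((1+ε) • d x y) + (ε/(1+ε)) * ρ (((1+ε)/ε) • (tn • e)) := h3
          _ ≤ (1/(1+ε)) * ((1 + ε * (k - 1)) * ρ (d x y)) + (ε/(1+ε)) * ((1 + ε) * tn / ε) := by
              gcongr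
          _ = (1/(1+ε)) * ((1 + ε * (k - 1)) * ρ (d x y)) + tn := by rw [hterm]
      have hcoef : (1/(1+ε)) * (1 + ε * (k - 1)) ≤ 1 + ε * k := by
        rw [div_mul_eq_mul_div, one_mul, div_le_iff₀ (by linarith : (0:ℝ) < 1 + ε)]
        nlinarith [mul_nonneg (mul_nonneg hε.le hε.le) hk0.le]
      calc ρ (d (u n) (v n)) ≤ ρ p := hcρp
        _ ≤ (1/(1+ε)) * ((1 + ε * (k - 1)) * ρ (d x y)) + tn := hρp
        _ ≤ (1 + ε * k) * ρ (d x y) + tn := by nlinarith [mul_le_mul_of_nonneg_right hcoef hD0]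
    have hL : ρ (d x y) ≤ (1 + ε * k) * ρ (d (u n) (v n)) + tn := by
      have h3 := L3 ε hε (d (u n) (v n)) (tn • e)
      have h2 := L2 ε (d (u n) (v n)) hε.le hε1
      have hterm : (ε/(1+ε)) * ((1 + ε) * tn / ε) = tn := by field_simp
      have hc0 : 0 ≤ ρ (d (u n) (v n)) := ρnn _
      have hρq : ρ q ≤ (1/(1+ε)) * ((1 + ε * (k - 1)) * ρ (d (u n) (v n))) + tn := by
        calc ρ q ≤ (1/(1+ε)) * ρ ((1+ε) • d (u n) (v n)) + (ε/(1+ε)) * ρ (((1+ε)/ε) • (tn • e)) := h3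
          _ ≤ (1/(1+ε)) * ((1 + ε * (k - 1)) * ρ (d (u n) (v n))) + (ε/(1+ε)) * ((1 + ε) * tn / ε) := by
              gcongr
          _ = (1/(1+ε)) * ((1 + ε * (k - 1)) * ρ (d (u n) (v n))) + tn := by rw [hterm]
      have hcoef : (1/(1+ε)) * (1 + ε * (k - 1)) ≤ 1 + ε * k := by
        rw [div_mul_eq_mul_div, one_mul, div_le_iff₀ (by linarith : (0:ℝ) < 1 + ε)]
        nlinarith [mul_nonneg (mul_nonneg hε.le hε.le) hk0.le]
      calc ρ (d x y) ≤ ρ q := hDρq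
        _ ≤ (1/(1+ε)) * ((1 + ε * (k - 1)) * ρ (d (u n) (v n))) + tn := hρq
        _ ≤ (1 + ε * k) * ρ (d (u n) (v n)) + tn := by
            nlinarith [mul_le_mul_of_nonneg_right hcoef hc0]
    have hc0 : 0 ≤ ρ (d (u n) (v n)) := ρnn _
    have hεk0 : 0 ≤ ε * k := mul_nonneg hε.le hk0.le
    have hDle : ρ (d x y) ≤ (k + 2) * ρ (d x y) + 1 := by nlinarith [mul_nonneg hk0.le hD0]
    have hcD : ρ (d (u n) (v n)) ≤ (k + 2) * ρ (d x y) + 1 := by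
      have h1 : (0:ℝ) ≤ (1 - ε) * k * ρ (d x y) :=
        mul_nonneg (mul_nonneg (by linarith) hk0.le) hD0
      nlinarith [hU]
    rw [abs_le]
    constructor
    · have h1 : ε * k * ρ (d (u n) (v n)) ≤ ε * k * ((k + 2) * ρ (d x y) + 1) :=
        mul_le_mul_of_nonneg_left hcD hεk0
      nlinarith [hL]
    · have h1 : ε * k * ρ (d x y) ≤ ε * k * ((k + 2) * ρ (d x y) + 1) :=
        mul_le_mul_of_nonneg_left hDle hεk0
      nlinarith [hU]
  -- conclude
  rw [Metric.tendsto_atTop]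
  intro δ hδ
  set M : ℝ := k * ((k + 2) * ρ (d x y) + 1) with hMdef
  have hM0 : 0 < M := by
    have h1 : (0:ℝ) < (k + 2) * ρ (d x y) + 1 := by nlinarith [mul_nonneg hk0.le hD0]
    exact mul_pos hk0 h1
  set ε : ℝ := min 1 (δ / (2 * M)) with hεdef
  have hε0 : 0 < ε := lt_min one_pos (by positivity)
  have hε1 : ε ≤ 1 := min_le_left _ _
  have hεM : ε * M ≤ δ / 2 := by
    have h1 : ε ≤ δ / (2 * M) := min_le_right _ _
    have h2 : ε * M ≤ (δ / (2 * M)) * M := mul_le_mul_of_nonneg_right h1 hM0.le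
    have h3 : (δ / (2 * M)) * M = δ / 2 := by field_simp
    linarith
  set τ : ℝ := min (ε / 4) (δ / 16) with hτdef
  have hτ0 : 0 < τ := lt_min (by positivity) (by positivity)
  obtain ⟨N₁, hN₁⟩ := Metric.tendsto_atTop.mp hu τ hτ0
  obtain ⟨N₂, hN₂⟩ := Metric.tendsto_atTop.mp hv τ hτ0
  refine ⟨max N₁ N₂, fun n hn => ?_⟩
  have ha := hN₁ n (le_trans (le_max_left _ _) hn)
  have hb := hN₂ n (le_trans (le_max_right _ _) hn)
  rw [Real.dist_eq, sub_zero, abs_of_nonneg (ρnn _)] at ha hb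
  have htn : ρ (d (u n) x) + ρ (d (v n) y) ≤ ε / 2 := by
    have h1 : τ ≤ ε / 4 := min_le_left _ _
    linarith
  have hkey := key ε hε0 hε1 n htn
  rw [Real.dist_eq]
  have h4 : τ ≤ δ / 16 := min_le_right _ _
  have h5 : 2 * (ρ (d (u n) x) + ρ (d (v n) y)) < δ / 4 := by linarith
  calc |ρ (d (u n) (v n)) - ρ (d x y)| ≤
      ε * M + 2 * (ρ (d (u n) x) + ρ (d (v n) y)) := hkey
    _ < δ / 2 + δ / 4 := by linarith
    _ < δ := by linarith
end

section
/- Let N be a real normed space and let (αₙ) be a sequence of positive real numbers decreasing to zero. For sequences x = (xₙ), y = (yₙ), z = (zₙ) in N with limsup_{n→∞} ‖xₙ‖^{αₙ} < ∞, limsup_{n→∞} ‖yₙ‖^{αₙ} < ∞ and limsup_{n→∞} ‖zₙ‖^{αₙ} < ∞, the quantity D(x,y) = limsup_{n→∞} ‖xₙ − yₙ‖^{αₙ} satisfies the strong triangle inequality: D(x,z) ≤ max{D(x,y), D(y,z)}. -/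
open Filter Topology

private lemma rpow_add_le_aux {s t c : ℝ} (hs : 0 ≤ s) (ht : 0 ≤ t) (hc : 0 ≤ c) :
    (s + t) ^ c ≤ (2:ℝ) ^ c * max (s ^ c) (t ^ c) := by
  have h1 : s + t ≤ 2 * max s t := by
    rcases max_cases s t with ⟨h, h'⟩ | ⟨h, h'⟩ <;> rw [h] <;> linarith
  have h2 : (s + t) ^ c ≤ (2 * max s t) ^ c :=
    Real.rpow_le_rpow (by linarith) h1 hc
  have h3 : (2 * max s t) ^ c = (2:ℝ) ^ c * (max s t) ^ c :=
    Real.mul_rpow (by norm_num) (le_max_of_le_left hs)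
  have h4 : (max s t) ^ c = max (s ^ c) (t ^ c) := by
    rcases le_total s t with h | h
    · rw [max_eq_right h, max_eq_right (Real.rpow_le_rpow hs h hc)]
    · rw [max_eq_left h, max_eq_left (Real.rpow_le_rpow ht h hc)]
  rw [← h4]
  exact h2.trans h3.le

private lemma bdd_sub_aux {N : Type*} [NormedAddCommGroup N]
    (α : ℕ → ℝ) (hαpos : ∀ n, 0 < α n) (hαdec : Antitone α)
    (u v : ℕ → N)
    (hu : IsBoundedUnder (· ≤ ·) atTop (fun n => ‖u n‖ ^ α n))
    (hv : IsBoundedUnder (· ≤ ·) atTop (fun n => ‖v n‖ ^ α n)) :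
    IsBoundedUnder (· ≤ ·) atTop (fun n => ‖u n - v n‖ ^ α n) := by
  obtain ⟨Cu, hCu⟩ := hu
  obtain ⟨Cv, hCv⟩ := hv
  rw [Filter.eventually_map] at hCu hCv
  refine ⟨(2:ℝ) ^ α 0 * max (max Cu 0) (max Cv 0), Filter.eventually_map.mpr ?_⟩
  filter_upwards [hCu, hCv] with n hun hvn
  have hle : ‖u n - v n‖ ^ α n ≤ (‖u n‖ + ‖v n‖) ^ α n :=
    Real.rpow_le_rpow (norm_nonneg _) (norm_sub_le _ _) (hαpos n).le
  refine hle.trans ((rpow_add_le_aux (norm_nonneg _) (norm_nonneg _) (hαpos n).le).trans ?_)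
  have h2 : (2:ℝ) ^ α n ≤ (2:ℝ) ^ α 0 :=
    Real.rpow_le_rpow_of_exponent_le one_le_two (hαdec (Nat.zero_le n))
  refine mul_le_mul h2 ?_ (le_max_of_le_left (Real.rpow_nonneg (norm_nonneg _) _))
    (Real.rpow_nonneg (by norm_num) _)
  exact max_le_max (hun.trans (le_max_left _ _)) (hvn.trans (le_max_left _ _))

/-- For sequences in a normed space with `limsup ‖xₙ‖^{αₙ} < ∞`, the quantity
`D(x,y) = limsup ‖xₙ - yₙ‖^{αₙ}` satisfies the strong triangle inequality. -/
theorem limsup_rpow_strong_triangle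
    {N : Type*} [NormedAddCommGroup N] [NormedSpace ℝ N]
    (α : ℕ → ℝ) (hαpos : ∀ n, 0 < α n) (hαdec : Antitone α)
    (hαlim : Tendsto α atTop (𝓝 0))
    (x y z : ℕ → N)
    (hx : IsBoundedUnder (· ≤ ·) atTop (fun n => ‖x n‖ ^ α n))
    (hy : IsBoundedUnder (· ≤ ·) atTop (fun n => ‖y n‖ ^ α n))
    (hz : IsBoundedUnder (· ≤ ·) atTop (fun n => ‖z n‖ ^ α n)) :
    limsup (fun n => ‖x n - z n‖ ^ α n) atTop ≤
      max (limsup (fun n => ‖x n - y n‖ ^ α n) atTop)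
          (limsup (fun n => ‖y n - z n‖ ^ α n) atTop) := by
  set a : ℕ → ℝ := fun n => ‖x n - y n‖ ^ α n with ha
  set b : ℕ → ℝ := fun n => ‖y n - z n‖ ^ α n with hb
  have hba : IsBoundedUnder (· ≤ ·) atTop a := bdd_sub_aux α hαpos hαdec x y hx hy
  have hbb : IsBoundedUnder (· ≤ ·) atTop b := bdd_sub_aux α hαpos hαdec y z hy hz
  set La := limsup a atTop with hLa
  set Lb := limsup b atTop with hLb
  set L := max La Lb with hL
  -- L is nonnegative
  have hanneg : ∀ n, 0 ≤ a n := fun n => Real.rpow_nonneg (norm_nonneg _) _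
  have hLa0 : 0 ≤ La :=
    le_limsup_of_frequently_le (Frequently.of_forall hanneg) hba
  have hL0 : 0 ≤ L := hLa0.trans (le_max_left _ _)
  -- tendsto of 2^αₙ to 1
  have h2tendsto : Tendsto (fun n => (2:ℝ) ^ α n) atTop (𝓝 1) := by
    have : ContinuousAt (fun t : ℝ => (2:ℝ) ^ t) (0:ℝ) := Real.continuousAt_const_rpow (a := 2) (b := 0) (by norm_num)
    simpa [Real.rpow_zero, Function.comp_def] using this.tendsto.comp hαlim
  -- main bound for every ε > 0
  have key : ∀ ε : ℝ, 0 < ε →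
      limsup (fun n => ‖x n - z n‖ ^ α n) atTop ≤ (1 + ε) * (L + ε) := by
    intro ε hε
    have hea : ∀ᶠ n in atTop, a n < La + ε :=
      eventually_lt_of_limsup_lt (by linarith) hba
    have heb : ∀ᶠ n in atTop, b n < Lb + ε :=
      eventually_lt_of_limsup_lt (by linarith) hbb
    have he2 : ∀ᶠ n in atTop, (2:ℝ) ^ α n < 1 + ε :=
      h2tendsto.eventually_lt_const (by linarith)
    refine limsup_le_of_le
      (isCoboundedUnder_le_of_le atTop fun n => Real.rpow_nonneg (norm_nonneg _) _) ?_
    filter_upwards [hea, heb, he2] with n h1 h2 h3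
    have htri : ‖x n - z n‖ ^ α n ≤ (‖x n - y n‖ + ‖y n - z n‖) ^ α n := by
      refine Real.rpow_le_rpow (norm_nonneg _) ?_ (hαpos n).le
      simpa using norm_sub_le_norm_sub_add_norm_sub (x n) (y n) (z n)
    refine htri.trans ((rpow_add_le_aux (norm_nonneg _) (norm_nonneg _) (hαpos n).le).trans ?_)
    have hmax : max (a n) (b n) ≤ L + ε :=
      max_le (h1.le.trans (add_le_add (le_max_left _ _) le_rfl))
        (h2.le.trans (add_le_add (le_max_right _ _) le_rfl))
    have hmax' : max (‖x n - y n‖ ^ α n) (‖y n - z n‖ ^ α n) ≤ L + ε := hmax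
    exact mul_le_mul h3.le hmax'
      (le_max_of_le_left (Real.rpow_nonneg (norm_nonneg _) _)) (by linarith)
  -- pass to the limit ε → 0⁺
  have htend : Tendsto (fun ε : ℝ => (1 + ε) * (L + ε)) (𝓝[>] 0) (𝓝 L) := by
    have : Tendsto (fun ε : ℝ => (1 + ε) * (L + ε)) (𝓝 0) (𝓝 ((1 + 0) * (L + 0))) := by
      exact ((continuous_const.add continuous_id).mul
        (continuous_const.add continuous_id)).tendsto 0
    simpa using this.mono_left nhdsWithin_le_nhds
  refine ge_of_tendsto htend ?_
  filter_upwards [self_mem_nhdsWithin] with ε hε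
  exact key ε hε
end

section
/- Let (X, d) be a spherically complete ultrametric space and let φ be a correspondence on X assigning to each x ∈ X a nonempty compact subset φ(x) ⊆ X. If for every x, y ∈ X with x ≠ y and every p ∈ φ(x) there exists q ∈ φ(y) such that d(p,q) < max{d(x,p), d(x,y), d(y,q)}, then φ has a fixed point: there exists g ∈ X with g ∈ φ(g). -/
open Metric

/-- An ultrametric space: the metric satisfies the strong triangle inequality. -/
def IsUltrametric' {X : Type*} [MetricSpace X] : Prop :=
  ∀ x y z : X, dist x z ≤ max (dist x y) (dist y z)

/-- Spherical completeness: every chain of closed balls (of positive radius)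
has nonempty intersection. -/
def SphericallyCompleteMetric (X : Type*) [MetricSpace X] : Prop :=
  ∀ C : Set (Set X),
    (∀ S ∈ C, ∃ (x : X) (r : ℝ), 0 < r ∧ S = Metric.closedBall x r) →
    IsChain (· ⊆ ·) C → (⋂₀ C).Nonempty

/-- Fixed point theorem for correspondences with nonempty compact values on a
spherically complete ultrametric space. -/
theorem ultrametric_fixed_point
    {X : Type*} [MetricSpace X]
    (hultra : @IsUltrametric' X _)
    (hsc : SphericallyCompleteMetric X)
    (φ : X → Set X) (hne : ∀ x, (φ x).Nonempty) (hcomp : ∀ x, IsCompact (φ x))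
    (hyp : ∀ x y : X, x ≠ y → ∀ p ∈ φ x, ∃ q ∈ φ y,
      dist p q < max (dist x p) (max (dist x y) (dist y q))) :
    ∃ g : X, g ∈ φ g := by
  by_contra hfix
  push_neg at hfix
  -- X is nonempty
  obtain ⟨x0, -⟩ := hsc ∅ (by simp) (by simp [IsChain, Set.Pairwise])
  -- the distance to the image, attained on the compact set
  set r : X → ℝ := fun x => Metric.infDist x (φ x) with hr
  have hatt : ∀ x : X, ∃ p ∈ φ x, r x = dist x p := fun x =>
    (hcomp x).exists_infDist_eq_dist (hne x) x
  have hrpos : ∀ x, 0 < r x := by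
    intro x
    obtain ⟨p, hp, hd⟩ := hatt x
    have hxp : x ≠ p := fun h => hfix x (h ▸ hp)
    rw [hd]
    exact dist_pos.mpr hxp
  -- key: if y is in the ball around x, then r y ≤ r x
  have key : ∀ x y : X, dist x y ≤ r x → r y ≤ r x := by
    intro x y hxy
    rcases eq_or_ne x y with rfl | hneq
    · exact le_rfl
    obtain ⟨p, hp, hd⟩ := hatt x
    obtain ⟨q, hq, hlt⟩ := hyp x y hneq p hp
    have hry : r y ≤ dist y q := Metric.infDist_le_dist_of_mem hq
    have hyq : dist y q ≤ r x := by
      by_contra hgt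
      push_neg at hgt
      have h1 : dist x p < dist y q := hd ▸ hgt
      have hmax : max (dist x p) (max (dist x y) (dist y q)) = dist y q := by
        rw [max_eq_right (hxy.trans hgt.le), max_eq_right h1.le]
      rw [hmax] at hlt
      -- now dist p q < dist y q, but ultrametric gives dist y q ≤ max ... < dist y q
      have h2 : dist y q ≤ max (dist y x) (dist x q) := hultra y x q
      have h3 : dist x q ≤ max (dist x p) (dist p q) := hultra x p q
      have h4 : dist y q ≤ max (dist y x) (max (dist x p) (dist p q)) :=
        h2.trans (max_le_max le_rfl h3)
      have h5 : max (dist y x) (max (dist x p) (dist p q)) < dist y q := by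
        apply max_lt
        · rw [dist_comm]; exact lt_of_le_of_lt hxy hgt
        · exact max_lt h1 hlt
      exact absurd (h4.trans_lt h5) (lt_irrefl _)
    exact hry.trans hyq
  have ballmono : ∀ x y : X, y ∈ closedBall x (r x) →
      closedBall y (r y) ⊆ closedBall x (r x) := by
    intro x y hy w hw
    rw [mem_closedBall] at *
    rw [dist_comm] at hy
    have := key x y hy
    calc dist w x ≤ max (dist w y) (dist y x) := hultra w y x
      _ ≤ r x := max_le ((hw.trans this)) (by rwa [dist_comm])
  -- Zorn on the family of balls
  set S : Set (Set X) := Set.range (fun x => closedBall x (r x)) with hS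
  have hchainlb : ∀ c ⊆ S, IsChain (· ⊆ ·) c → ∃ lb ∈ S, ∀ s ∈ c, lb ⊆ s := by
    intro c hcS hchain
    rcases c.eq_empty_or_nonempty with rfl | hcne
    · exact ⟨closedBall x0 (r x0), ⟨x0, rfl⟩, by simp⟩
    · obtain ⟨z, hz⟩ := hsc c (fun s hs => by
        obtain ⟨x, hx⟩ := hcS hs
        exact ⟨x, r x, hrpos x, hx.symm⟩) hchain
      refine ⟨closedBall z (r z), ⟨z, rfl⟩, fun s hs => ?_⟩
      obtain ⟨x, rfl⟩ := hcS hs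
      exact ballmono x z (hz _ hs)
  obtain ⟨m, hmin⟩ := zorn_superset S hchainlb
  obtain ⟨z, hz⟩ := hmin.prop
  obtain ⟨p, hp, hd⟩ := hatt z
  have hzp : z ≠ p := fun h => hfix z (h ▸ hp)
  obtain ⟨q, hq, hlt⟩ := hyp z p hzp p hp
  have hpq : dist p q < dist z p := by
    by_contra hge
    push_neg at hge
    rw [max_eq_right hge, max_eq_right hge] at hlt
    exact lt_irrefl _ hlt
  have hrp : r p < r z := by
    have : r p ≤ dist p q := Metric.infDist_le_dist_of_mem hq
    exact this.trans_lt (hd ▸ hpq)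
  have hpmem : p ∈ closedBall z (r z) := by rw [mem_closedBall, dist_comm, ← hd]
  have hsub : closedBall p (r p) ⊆ m := hz ▸ ballmono z p hpmem
  have heq : closedBall p (r p) = m := hmin.eq_of_le ⟨p, rfl⟩ hsub
  have hzmem : z ∈ closedBall p (r p) := by
    rw [heq, ← hz]; exact mem_closedBall_self (le_of_lt (hrpos z))
  rw [mem_closedBall] at hzmem
  exact absurd (hzmem.trans_lt hrp) (by rw [hd]; exact lt_irrefl _)
end

section
/- Let (X, d) be a spherically complete ultrametric space and let φ be a correspondence on X assigning to each x ∈ X a nonempty compact subset φ(x) ⊆ X. If for every x, y ∈ X with x ≠ y and every p ∈ φ(x) there exists q ∈ φ(y) such that d(p,q) < d(x,y), then φ has a fixed point: there exists g ∈ X with g ∈ φ(g). -/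
open Metric

/-- Fixed point theorem for correspondences with nonempty compact values on a
spherically complete ultrametric space. -/
theorem ultrametric_fixed_point_contractive
    {X : Type*} [MetricSpace X]
    (hultra : @IsUltrametric' X _)
    (hsc : SphericallyCompleteMetric X)
    (φ : X → Set X) (hne : ∀ x, (φ x).Nonempty) (hcomp : ∀ x, IsCompact (φ x))
    (hyp : ∀ x y : X, x ≠ y → ∀ p ∈ φ x, ∃ q ∈ φ y,
      dist p q < dist x y) :
    ∃ g : X, g ∈ φ g := by
  by_contra hfix
  push_neg at hfix
  set r : X → ℝ := fun x => Metric.infDist x (φ x) with hrdef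
  have hrpos : ∀ x, 0 < r x := by
    intro x
    rcases (Metric.infDist_nonneg (s := φ x) (x := x)).lt_or_eq with h | h
    · exact h
    · exact absurd (((hcomp x).isClosed.mem_iff_infDist_zero (hne x)).mpr h.symm) (hfix x)
  have hmono : ∀ x z : X, dist x z ≤ r x → r z ≤ r x := by
    intro x z hxz
    by_cases hxz' : x = z
    · subst hxz'; exact le_refl _
    obtain ⟨p, hp, hpd⟩ := (hcomp x).exists_infDist_eq_dist (hne x) x
    obtain ⟨q, hq, hqd⟩ := hyp x z hxz' p hp
    have h1 : dist z q ≤ r x := by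
      have h2 : dist z p ≤ r x := le_trans (hultra z x p)
        (max_le (by rwa [dist_comm]) (le_of_eq hpd.symm))
      have h3 : dist p q ≤ r x := le_of_lt (lt_of_lt_of_le hqd hxz)
      exact le_trans (hultra z p q) (max_le h2 h3)
    exact le_trans (Metric.infDist_le_dist_of_mem hq) h1
  set B : X → Set X := fun x => Metric.closedBall x (r x) with hBdef
  have hBsub : ∀ x z : X, dist x z ≤ r x → B z ⊆ B x := by
    intro x z h w hw
    rw [hBdef, Metric.mem_closedBall, dist_comm] at hw ⊢
    exact le_trans (hultra x z w) (max_le h (le_trans hw (hmono x z h)))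
  -- X is nonempty via spherical completeness applied to the empty chain
  obtain ⟨x0, -⟩ := hsc ∅ (by simp) (by simp [IsChain])
  have hub : ∀ c ⊆ Set.range B, IsChain (· ⊆ ·) c → ∃ lb ∈ Set.range B, ∀ s ∈ c, lb ⊆ s := by
    intro c hcS hchain
    rcases c.eq_empty_or_nonempty with rfl | hcne
    · exact ⟨B x0, ⟨x0, rfl⟩, by simp⟩
    have hballs : ∀ s ∈ c, ∃ (x : X) (ρ : ℝ), 0 < ρ ∧ s = Metric.closedBall x ρ := by
      intro s hs
      obtain ⟨x, hx⟩ := hcS hs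
      exact ⟨x, r x, hrpos x, hx.symm⟩
    obtain ⟨z, hz⟩ := hsc c hballs hchain
    refine ⟨B z, ⟨z, rfl⟩, fun s hs => ?_⟩
    obtain ⟨x, hx⟩ := hcS hs
    have hzx : z ∈ B x := hx ▸ hz s hs
    rw [hBdef, Metric.mem_closedBall, dist_comm] at hzx
    exact hx ▸ hBsub x z hzx
  obtain ⟨m, hm⟩ := zorn_superset (Set.range B) hub
  · obtain ⟨x, hx⟩ := hm.prop
    obtain ⟨p, hp, hpd0⟩ := (hcomp x).exists_infDist_eq_dist (hne x) x
    have hpd : r x = dist x p := hpd0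
    have hxp : x ≠ p := by
      intro h; rw [← h, dist_self] at hpd; exact (hrpos x).ne' hpd
    obtain ⟨q, hq, hqd⟩ := hyp x p hxp p hp
    have hrplt : r p < r x := by
      refine lt_of_le_of_lt (Metric.infDist_le_dist_of_mem hq) ?_
      rw [hpd]; exact hqd
    have hBpBx : B p ⊆ B x := hBsub x p (le_of_eq hpd.symm)
    have hmem : B p ∈ Set.range B := ⟨p, rfl⟩
    have heq : B p = m := hm.eq_of_le hmem (hx ▸ hBpBx)
    have hxm : x ∈ m := hx ▸ Metric.mem_closedBall_self (hrpos x).le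
    rw [← heq, hBdef, Metric.mem_closedBall] at hxm
    exact absurd hrplt (not_lt.mpr (hpd.le.trans hxm))
end
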